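/- arXiv:1904.05704 — 8 statements merged into one kernel-verified Lean document; each statement's English description precedes it below -/
import Mathlib

section
/- Let p, q, τ be real numbers with τ > 0. All complex roots λ of the equation λ + p + q e^{-λτ} = 0 have negative real part if and only if either (-p < q ≤ p), or (|p| < q and 0 < τ < (1/√(q² - p²))·arccos(-p/q)). -/
set_option maxHeartbeats 1000000
open Real


lemma root_iff (p q τ x y : ℝ) :
    (Complex.mk x y) + (p:ℂ) + (q:ℂ) * Complex.exp (-(Complex.mk x y) * τ) = 0 ↔
      (x + p + q * Real.exp (-x*τ) * Real.cos (y*τ) = 0 ∧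
       y - q * Real.exp (-x*τ) * Real.sin (y*τ) = 0) := by
  rw [Complex.ext_iff]
  have h1 : ((-(Complex.mk x y)) * τ).re = -x*τ := by simp [Complex.mul_re]
  have h2 : ((-(Complex.mk x y)) * τ).im = -y*τ := by simp [Complex.mul_im]
  simp [Complex.add_re, Complex.add_im, Complex.mul_re, Complex.mul_im,
    Complex.exp_re, Complex.exp_im, h1, h2, Real.cos_neg, Real.sin_neg]
  constructor
  · rintro ⟨a, b⟩; constructor <;> nlinarith
  · rintro ⟨a, b⟩; constructor <;> nlinarith


lemma sin_ratio (u v : ℝ) (hv : 0 < v) (hvu : v ≤ u) (hu : u ≤ π) :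
    v * Real.sin u ≤ u * Real.sin v := by
  have hu0 : 0 < u := lt_of_lt_of_le hv hvu
  have hcc := strictConcaveOn_sin_Icc.concaveOn
  have h0 : (0:ℝ) ∈ Set.Icc (0:ℝ) π := by constructor <;> [rfl; exact Real.pi_nonneg]
  have hum : u ∈ Set.Icc (0:ℝ) π := ⟨hu0.le, hu⟩
  have ha : (0:ℝ) ≤ 1 - v/u := by
    have : v/u ≤ 1 := (div_le_one hu0).2 hvu
    linarith
  have hb : (0:ℝ) ≤ v/u := by positivity
  have hab : (1 - v/u) + v/u = 1 := by ring
  have := hcc.2 h0 hum ha hb hab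
  simp only [smul_eq_mul, mul_zero, Real.sin_zero, zero_add, mul_zero, add_zero] at this
  have hvu' : v/u * u = v := div_mul_cancel₀ v hu0.ne'
  rw [hvu'] at this
  have := mul_le_mul_of_nonneg_left this hu0.le
  calc v * Real.sin u = u * (v/u * Real.sin u) := by field_simp
    _ ≤ u * Real.sin v := this

lemma q_sin_arccos (p q : ℝ) (hq : 0 < q) :
    q * Real.sin (Real.arccos (p/q)) = Real.sqrt (q^2 - p^2) := by
  rw [Real.sin_arccos]
  rw [show q = Real.sqrt (q^2) by rw [Real.sqrt_sq hq.le]]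
  rw [← Real.sqrt_mul (by positivity)]
  congr 1
  rw [Real.sqrt_sq hq.le]
  field_simp

lemma arccos_anti {a b : ℝ} (h : a ≤ b) : Real.arccos b ≤ Real.arccos a := by
  simp only [Real.arccos]
  have := Real.monotone_arcsin h
  linarith

lemma tau_star_bound (p q : ℝ) (hp : p < 0) (hq : -p < q) :
    -p * Real.arccos (-(p/q)) < Real.sqrt (q^2 - p^2) := by
  have hq0 : 0 < q := lt_trans (by linarith) hq
  set c := -(p/q) with hc
  have hc0 : 0 < c := by rw [hc, ← neg_div]; exact div_pos (by linarith) hq0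
  have hc1 : c < 1 := by rw [hc, ← neg_div, div_lt_one hq0]; linarith
  set θ := Real.arccos c with hθ
  have hθ0 : 0 < θ := Real.arccos_pos.2 hc1
  have hθ2 : θ < π/2 := Real.arccos_lt_pi_div_two.2 hc0
  have htan : θ < Real.tan θ := Real.lt_tan hθ0 hθ2
  have hcos : Real.cos θ = c := Real.cos_arccos (by linarith) hc1.le
  have hcospos : 0 < Real.cos θ := by rw [hcos]; exact hc0
  rw [Real.tan_eq_sin_div_cos] at htan
  have key : θ * Real.cos θ < Real.sin θ := by
    rw [lt_div_iff₀ hcospos] at htan; linarith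
  have hp' : -p = q * c := by rw [hc]; field_simp
  rw [hp']
  have h2 : q * Real.sin θ = Real.sqrt (q^2 - p^2) := by
    rw [hθ, hc, Real.arccos_neg, Real.sin_pi_sub, q_sin_arccos p q hq0]
  rw [← h2, hcos] at *
  nlinarith [key, hq0]

lemma aux_sq_bounds (t : ℝ) (h : t^2 < 1) : -1 < t ∧ t < 1 := by
  constructor <;> nlinarith [sq_nonneg (t+1), sq_nonneg (t-1)]

lemma no_root_B (p q τ x y : ℝ) (hτ : 0 < τ) (hpq : |p| < q)
    (hts : τ < 1 / Real.sqrt (q ^ 2 - p ^ 2) * Real.arccos (-(p / q)))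
    (hx : 0 ≤ x) (hy : 0 ≤ y)
    (E1 : x + p + q * Real.exp (-x*τ) * Real.cos (y*τ) = 0)
    (E2 : y - q * Real.exp (-x*τ) * Real.sin (y*τ) = 0) : False := by
  obtain ⟨hpl, hpu⟩ := abs_lt.1 hpq
  have hq0 : 0 < q := lt_of_le_of_lt (abs_nonneg p) hpq
  have hp2 : p^2 < q^2 := by nlinarith only [hpl, hpu, hq0]
  obtain ⟨ω, hω⟩ : ∃ w, w = Real.sqrt (q^2 - p^2) := ⟨_, rfl⟩
  have hω0 : 0 < ω := hω ▸ Real.sqrt_pos.2 (by linarith only [hp2])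
  have hpq1 : -1 < p/q := by rw [lt_div_iff₀ hq0]; linarith only [hpl]
  have hpq2 : p/q < 1 := by rw [div_lt_one hq0]; linarith only [hpu]
  obtain ⟨θ, hθ⟩ : ∃ t, t = Real.arccos (-(p/q)) := ⟨_, rfl⟩
  rw [← hω, ← hθ] at hts
  have hθpos : 0 < θ := hθ ▸ Real.arccos_pos.2 (by linarith only [hpq1])
  have hθπ : θ ≤ π := hθ ▸ Real.arccos_le_pi _
  have hτω : τ * ω < θ := by
    rw [one_div] at hts
    calc τ * ω < (ω⁻¹ * θ) * ω := mul_lt_mul_of_pos_right hts hω0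
      _ = θ := by field_simp
  have hpt : 0 < 1 + p * τ := by
    rcases le_or_gt 0 p with hp | hp
    · have := mul_nonneg hp hτ.le; linarith only [this]
    · have h1 := tau_star_bound p q hp (by linarith only [hpl])
      rw [← hω, ← hθ] at h1
      have h2 := mul_lt_mul_of_pos_left hτω (neg_pos.2 hp)
      nlinarith only [h1, h2, hω0, hp]
  have hexp : 0 < Real.exp (-x*τ) := Real.exp_pos _
  have hexp1 : Real.exp (-x*τ) ≤ 1 :=
    Real.exp_le_one_iff.2 (by have := mul_nonneg hx hτ.le; linarith only [this])
  have hlin : 1 - x*τ ≤ Real.exp (-x*τ) := by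
    have := Real.add_one_le_exp (-x*τ); linarith only [this]
  rcases eq_or_lt_of_le hy with hy0 | hy0
  · rw [← hy0] at E1
    simp only [zero_mul, Real.cos_zero, mul_one] at E1
    rcases le_or_gt 0 p with hp | hp
    · have := mul_pos hq0 hexp
      linarith only [E1, hx, hp, this]
    · have A := mul_lt_mul_of_pos_right (show -p < q by linarith only [hpl]) hexp
      have B := mul_le_mul_of_nonneg_left hlin (show (0:ℝ) ≤ -p by linarith only [hp])
      have C := mul_nonneg hx hpt.le
      linarith only [E1, A, B, C]
  · obtain ⟨r, hr⟩ : ∃ r, r = q * Real.exp (-x*τ) := ⟨_, rfl⟩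
    rw [← hr] at E1 E2
    have hr0 : 0 < r := by rw [hr]; positivity
    have hrq : r ≤ q := by
      have := mul_le_mul_of_nonneg_left hexp1 hq0.le
      rw [hr]; linarith only [this]
    have hpyth := Real.sin_sq_add_cos_sq (y*τ)
    have hsum : (x+p)^2 + y^2 = r^2 := by
      linear_combination (x + p - r * Real.cos (y*τ)) * E1 + (y + r * Real.sin (y*τ)) * E2 + r^2 * hpyth
    have habs : ((x+p)/r)^2 < 1 := by
      rw [div_pow, div_lt_one (pow_pos hr0 2)]
      linarith only [hsum, pow_pos hy0 2]
    obtain ⟨h1, h2⟩ := aux_sq_bounds _ habs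
    obtain ⟨α, hα⟩ : ∃ a, a = Real.arccos ((x+p)/r) := ⟨_, rfl⟩
    have hα0 : 0 < α := hα ▸ Real.arccos_pos.2 h2
    have hαπ' : α ≤ π := hα ▸ Real.arccos_le_pi _
    have hαπ : α < π := lt_of_le_of_ne hαπ'
      (fun h => by rw [hα, Real.arccos_eq_pi] at h; linarith only [h, h1]; )
    have hcosα : Real.cos α = (x+p)/r := hα ▸ Real.cos_arccos h1.le h2.le
    have hsinα : Real.sin α = y/r := by
      rw [hα, Real.sin_arccos,
        show 1 - ((x+p)/r)^2 = (y/r)^2 by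
          rw [div_pow, div_pow, eq_div_iff (pow_pos hr0 2).ne']
          field_simp
          linarith only [hsum]]
      exact Real.sqrt_sq (div_nonneg hy0.le hr0.le)
    have hc : Real.cos (y*τ) = -((x+p)/r) := by
      field_simp
      linarith only [E1]
    have hs : Real.sin (y*τ) = y/r := by
      rw [eq_comm, div_eq_iff hr0.ne']
      linarith only [E2]
    have hcos1 : Real.cos (y*τ - (π - α)) = 1 := by
      rw [Real.cos_sub, Real.cos_pi_sub, Real.sin_pi_sub, hcosα, hsinα, hc, hs]
      field_simp
      linear_combination hsum
    obtain ⟨n, hn⟩ := (Real.cos_eq_one_iff _).1 hcos1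
    have hyτ : π - α ≤ y * τ := by
      rcases le_or_gt 0 (n:ℝ) with hn0 | hn0
      · have := mul_nonneg hn0 (by positivity : (0:ℝ) ≤ 2*π)
        linarith only [hn, this]
      · exfalso
        have hn1 : (n:ℝ) ≤ -1 := by
          have h9 : n < 0 := by exact_mod_cast hn0
          have h10 : n ≤ -1 := by omega
          exact_mod_cast h10
        have h3 := mul_le_mul_of_nonneg_right hn1 (by positivity : (0:ℝ) ≤ 2*π)
        have h4 := mul_pos hy0 hτ
        linarith only [hn, h3, h4, hα0, hαπ', Real.pi_pos]
    obtain ⟨β, hβ⟩ : ∃ b, b = Real.arccos (p/q) := ⟨_, rfl⟩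
    have hαβ : α ≤ β := by
      rw [hα, hβ]
      apply arccos_anti
      rw [div_le_div_iff₀ hq0 hr0, hr]
      rcases le_or_gt 0 p with hp | hp
      · have h5 := mul_le_mul_of_nonneg_left (mul_le_mul_of_nonneg_left hexp1 hp) hq0.le
        have h6 := mul_nonneg hx hq0.le
        linarith only [h5, h6]
      · have B := mul_le_mul_of_nonneg_left hlin (show (0:ℝ) ≤ -p by linarith only [hp])
        have C := mul_nonneg hx hpt.le
        have h7 : p * Real.exp (-x*τ) ≤ x + p := by linarith only [B, C]
        have h8 := mul_le_mul_of_nonneg_right h7 hq0.le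
        linarith only [h8]
    have hβ0 : 0 < β := hβ ▸ Real.arccos_pos.2 hpq2
    have hβπ' : β ≤ π := hβ ▸ Real.arccos_le_pi _
    have hβπ : β < π := lt_of_le_of_ne hβπ'
      (fun h => by rw [hβ, Real.arccos_eq_pi] at h; linarith only [h, hpq1])
    have hsinβ : q * Real.sin β = ω := by rw [hβ, hω]; exact q_sin_arccos p q hq0
    have hθβ : θ = π - β := by rw [hθ, hβ, Real.arccos_neg]
    have hsinβ0 : 0 < Real.sin β := hβ ▸
      Real.sin_pos_of_pos_of_lt_pi (Real.arccos_pos.2 hpq2) (hβ ▸ hβπ)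
    have hratio : (π - β) * Real.sin α ≤ (π - α) * Real.sin β := by
      have := sin_ratio (π - α) (π - β) (by linarith only [hβπ])
        (by linarith only [hαβ]) (by linarith only [hα0])
      rwa [Real.sin_pi_sub, Real.sin_pi_sub] at this
    have hsinα0 : 0 < Real.sin α := by rw [hsinα]; exact div_pos hy0 hr0
    have hy_le : y ≤ q * Real.sin α := by
      rw [hsinα]
      have e1 : r * (y / r) = y := by field_simp
      have e2 : r * (y/r) ≤ q * (y/r) :=
        mul_le_mul_of_nonneg_right hrq (div_nonneg hy0.le hr0.le)
      linarith only [e1, e2]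
    have s1 : (π - β) * y ≤ (π - β) * (q * Real.sin α) :=
      mul_le_mul_of_nonneg_left hy_le (by linarith only [hβπ])
    have s3 : q * ((π - β) * Real.sin α) ≤ q * ((π - α) * Real.sin β) :=
      mul_le_mul_of_nonneg_left hratio hq0.le
    have s4 := mul_le_mul_of_nonneg_left
      (mul_le_mul_of_nonneg_right hyτ hsinβ0.le) hq0.le
    have e5 : y * τ * (q * Real.sin β) = y * τ * ω := by rw [hsinβ]
    have hfinal : (π - β) * y ≤ y * τ * ω := by linarith only [s1, s3, s4, e5]
    rw [hθβ] at hτω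
    have := mul_lt_mul_of_pos_left hτω hy0
    linarith only [hfinal, this]


lemma no_root_A (p q τ x y : ℝ) (hτ : 0 < τ) (h1 : -p < q) (h2 : q ≤ p)
    (hx : 0 ≤ x)
    (E1 : x + p + q * Real.exp (-x*τ) * Real.cos (y*τ) = 0)
    (E2 : y - q * Real.exp (-x*τ) * Real.sin (y*τ) = 0) : False := by
  have hp : 0 < p := by linarith only [h1, h2]
  have hexp : 0 < Real.exp (-x*τ) := Real.exp_pos _
  have hexp1 : Real.exp (-x*τ) ≤ 1 :=
    Real.exp_le_one_iff.2 (by have := mul_nonneg hx hτ.le; linarith only [this])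
  have hcu := Real.cos_le_one (y*τ)
  have hcl := Real.neg_one_le_cos (y*τ)
  have hx0 : x = 0 := by
    have hA : 0 ≤ (p - q) * (Real.exp (-x*τ) * (1 - Real.cos (y*τ))) :=
      mul_nonneg (by linarith only [h2]) (mul_nonneg hexp.le (by linarith only [hcu]))
    have hB : 0 ≤ (p + q) * (Real.exp (-x*τ) * (1 + Real.cos (y*τ))) :=
      mul_nonneg (by linarith only [h1]) (mul_nonneg hexp.le (by linarith only [hcl]))
    have hC : 0 ≤ p * (1 - Real.exp (-x*τ)) := mul_nonneg hp.le (by linarith only [hexp1])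
    have : x ≤ 0 := by linarith only [E1, hA, hB, hC]
    linarith only [this, hx]
  rw [hx0] at E1 E2
  simp only [neg_zero, zero_mul, Real.exp_zero, mul_one, one_mul, zero_add] at E1 E2
  have hpyth := Real.sin_sq_add_cos_sq (y*τ)
  have hq2 : q^2 ≤ p^2 := by nlinarith only [h1, h2, hp]
  have hy2 : y^2 = q^2 - p^2 := by
    linear_combination (y + q * Real.sin (y*τ)) * E2 + q^2 * hpyth +
      (p - q * Real.cos (y*τ)) * E1
  have hy0 : y = 0 := by
    have h3 : y^2 = 0 := le_antisymm (by linarith only [hy2, hq2]) (sq_nonneg y)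
    exact pow_eq_zero_iff two_ne_zero |>.1 h3
  rw [hy0] at E1
  simp only [zero_mul, Real.cos_zero, mul_one] at E1
  linarith only [E1, h1]

lemma exists_real_root (p q τ : ℝ) (hτ : 0 < τ) (hpq : p + q ≤ 0) :
    ∃ x : ℝ, 0 ≤ x ∧ x + p + q * Real.exp (-x*τ) = 0 := by
  set f : ℝ → ℝ := fun x => x + p + q * Real.exp (-x*τ) with hf
  have hc : Continuous f := by fun_prop
  set M : ℝ := |p| + |q| + 1 with hM
  have hM0 : 0 ≤ M := by positivity
  have hfM : 0 < f M := by
    have h1 : Real.exp (-M*τ) ≤ 1 :=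
      Real.exp_le_one_iff.2 (by nlinarith only [hM0, hτ])
    have h2 : 0 < Real.exp (-M*τ) := Real.exp_pos _
    have h3 : q * Real.exp (-M*τ) ≥ -|q| := by
      rcases le_or_gt 0 q with h | h
      · nlinarith only [h, h2, abs_of_nonneg h]
      · rw [abs_of_neg h]; nlinarith only [h, h1, h2]
    have := abs_nonneg p
    have h4 : p ≥ -|p| := neg_abs_le p
    simp only [hf, hM]
    nlinarith only [h3, h4, this]
  have hf0 : f 0 ≤ 0 := by simp [hf]; simpa using hpq
  have := intermediate_value_Icc hM0 hc.continuousOn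
  have h0mem : (0:ℝ) ∈ Set.Icc (f 0) (f M) := ⟨hf0, hfM.le⟩
  obtain ⟨x, hxmem, hfx⟩ := this h0mem
  exact ⟨x, hxmem.1, hfx⟩

lemma aux_id1 (a e f qq : ℝ) (hq : qq ≠ 0) (he : e * f = 1) :
    qq * e * (-(a * f / qq)) = -a := by
  field_simp
  linear_combination (-a) * he
lemma aux_id2 (a e f qq : ℝ) (hq : qq ≠ 0) (he : e * f = 1) :
    1 - (-(a * f / qq))^2 = (f/qq)^2 * ((qq*e)^2 - a^2) := by
  field_simp
  linear_combination (-qq^2 * (e*f + 1)) * he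
lemma aux_id3 (Y e f qq : ℝ) (hq : qq ≠ 0) (he : e * f = 1) :
    qq * e * (f / qq * Y) = Y := by
  field_simp
  linear_combination Y * he

lemma exists_root_late (p q τ : ℝ) (hτ : 0 < τ) (hpq : |p| < q)
    (hts : Real.arccos (-(p/q)) ≤ τ * Real.sqrt (q^2 - p^2)) :
    ∃ x y : ℝ, 0 ≤ x ∧
      (x + p + q * Real.exp (-x*τ) * Real.cos (y*τ) = 0 ∧
       y - q * Real.exp (-x*τ) * Real.sin (y*τ) = 0) := by
  obtain ⟨hpl, hpu⟩ := abs_lt.1 hpq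
  have hq0 : 0 < q := lt_of_le_of_lt (abs_nonneg p) hpq
  have hp2 : p^2 < q^2 := by nlinarith only [hpl, hpu, hq0]
  -- D function
  set D : ℝ → ℝ := fun x => (q * Real.exp (-x*τ))^2 - (x+p)^2 with hD
  have hDc : Continuous D := by fun_prop
  have hD0 : 0 < D 0 := by
    simp only [hD]
    simp [Real.exp_zero]
    nlinarith only [hp2]
  set M : ℝ := |p| + q + 1 with hM
  have hM0 : 0 < M := by positivity
  have hDM : D M < 0 := by
    have h1 : Real.exp (-M*τ) ≤ 1 :=
      Real.exp_le_one_iff.2 (by nlinarith only [hM0, hτ])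
    have h2 : 0 < Real.exp (-M*τ) := Real.exp_pos _
    have h4 : p ≥ -|p| := neg_abs_le p
    have h5 : q * Real.exp (-M*τ) ≤ q := by nlinarith only [h1, hq0]
    have h6 : M + p ≥ q + 1 := by simp only [hM]; linarith only [h4]
    have h7 : (q * Real.exp (-M*τ))^2 ≤ q^2 :=
      pow_le_pow_left₀ (mul_pos hq0 h2).le h5 2
    have h8 : (q+1)^2 ≤ (M+p)^2 := pow_le_pow_left₀ (by positivity) h6 2
    simp only [hD]
    nlinarith only [h7, h8, hq0]
  -- first zero of D
  set S : Set ℝ := {x | x ∈ Set.Icc 0 M ∧ D x ≤ 0} with hS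
  have hSne : S.Nonempty := ⟨M, ⟨⟨hM0.le, le_refl M⟩, hDM.le⟩⟩
  have hSbdd : BddBelow S := ⟨0, fun x hx => hx.1.1⟩
  have hSclosed : IsClosed S := by
    have : S = Set.Icc 0 M ∩ {x | D x ≤ 0} := rfl
    rw [this]
    exact isClosed_Icc.inter (isClosed_le hDc continuous_const)
  set X : ℝ := sInf S with hX
  have hXmem : X ∈ S := hSclosed.csInf_mem hSne hSbdd
  have hX0 : 0 ≤ X := hXmem.1.1
  have hXM : X ≤ M := hXmem.1.2
  have hDXle : D X ≤ 0 := hXmem.2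
  have hIco : ∀ x ∈ Set.Ico 0 X, 0 < D x := by
    intro x hx
    by_contra h
    push_neg at h
    have : x ∈ S := ⟨⟨hx.1, le_trans hx.2.le hXM⟩, h⟩
    have := csInf_le hSbdd this
    rw [← hX] at this
    exact absurd hx.2 (not_lt.2 this)
  have hXpos : 0 < X := by
    rcases eq_or_lt_of_le hX0 with h | h
    · exfalso; rw [← h] at hDXle; linarith only [hDXle, hD0]
    · exact h
  have hDXge : 0 ≤ D X := by
    haveI hne : (nhdsWithin X (Set.Ico 0 X)).NeBot := by
      apply mem_closure_iff_nhdsWithin_neBot.1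
      rw [closure_Ico hXpos.ne]
      exact ⟨hX0, le_refl X⟩
    refine ge_of_tendsto ((hDc.continuousWithinAt (s := Set.Ico 0 X) (x := X)).tendsto) ?_
    exact Filter.eventually_of_mem self_mem_nhdsWithin (fun x hx => (hIco x hx).le)
  have hDX : D X = 0 := le_antisymm hDXle hDXge
  -- H function
  set A : ℝ → ℝ := fun x => -((x+p) * Real.exp (x*τ) / q) with hA
  set H : ℝ → ℝ := fun x => τ * Real.sqrt (D x) - Real.arccos (A x) with hH
  have hHc : Continuous H := by
    apply Continuous.sub
    · exact continuous_const.mul (hDc.sqrt)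
    · exact Real.continuous_arccos.comp (by fun_prop)
  have hH0 : 0 ≤ H 0 := by
    have hA0 : A 0 = -(p/q) := by simp [hA, Real.exp_zero]
    have hD0' : D 0 = q^2 - p^2 := by simp [hD, Real.exp_zero]
    simp only [hH, hA0, hD0']
    linarith only [hts]
  have hHX : H X ≤ 0 := by
    simp only [hH, hDX, Real.sqrt_zero, mul_zero, zero_sub]
    have := Real.arccos_nonneg (A X)
    linarith only [this]
  obtain ⟨x₀, hx₀mem, hHx₀⟩ := intermediate_value_Icc' hX0 hHc.continuousOn
    (Set.mem_Icc.2 ⟨hHX, hH0⟩)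
  have hx₀0 : 0 ≤ x₀ := hx₀mem.1
  have hDx₀ : 0 ≤ D x₀ := by
    rcases eq_or_lt_of_le hx₀mem.2 with h | h
    · rw [h, hDX]
    · exact (hIco x₀ ⟨hx₀0, h⟩).le
  -- recover the root
  have hexp : 0 < Real.exp (-x₀*τ) := Real.exp_pos _
  have hexpid : Real.exp (-x₀*τ) * Real.exp (x₀*τ) = 1 := by
    rw [← Real.exp_add]; ring_nf; exact Real.exp_zero
  have h12 : (q * Real.exp (-x₀*τ))^2 * (Real.exp (x₀*τ))^2 = q^2 := by
    rw [mul_pow, mul_assoc, ← mul_pow, hexpid, one_pow, mul_one]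
  have hA2 : (A x₀)^2 ≤ 1 := by
    simp only [hA, hD] at hDx₀ ⊢
    rw [neg_sq, div_pow, div_le_one (by positivity)]
    have h9 : (x₀+p)^2 ≤ (q * Real.exp (-x₀*τ))^2 := by linarith only [hDx₀]
    have h10 := mul_le_mul_of_nonneg_right h9 (sq_nonneg (Real.exp (x₀*τ)))
    calc ((x₀+p) * Real.exp (x₀*τ))^2 = (x₀+p)^2 * (Real.exp (x₀*τ))^2 := by ring
      _ ≤ (q * Real.exp (-x₀*τ))^2 * (Real.exp (x₀*τ))^2 := h10
      _ = q^2 := h12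
  have hA1 : -1 ≤ A x₀ ∧ A x₀ ≤ 1 := by
    constructor <;> nlinarith only [hA2, sq_nonneg (A x₀ + 1), sq_nonneg (A x₀ - 1)]
  set Y : ℝ := Real.sqrt (D x₀) with hY
  have hY0 : 0 ≤ Y := Real.sqrt_nonneg _
  have hYτ : Y * τ = Real.arccos (A x₀) := by
    simp only [hH] at hHx₀
    rw [← hY] at hHx₀
    linarith only [hHx₀]
  have hcos : Real.cos (Y*τ) = A x₀ := by
    rw [hYτ]; exact Real.cos_arccos hA1.1 hA1.2
  have hsin : Real.sin (Y*τ) = Real.sqrt (1 - (A x₀)^2) := by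
    rw [hYτ]; exact Real.sin_arccos _
  refine ⟨x₀, Y, hx₀0, ?_, ?_⟩
  · rw [hcos]
    simp only [hA]
    have := aux_id1 (x₀+p) (Real.exp (-x₀*τ)) (Real.exp (x₀*τ)) q hq0.ne' hexpid
    linarith only [this]
  · rw [hsin]
    have key : 1 - (A x₀)^2 = (Real.exp (x₀*τ)/q)^2 * D x₀ := by
      simp only [hA, hD]
      exact aux_id2 (x₀+p) (Real.exp (-x₀*τ)) (Real.exp (x₀*τ)) q hq0.ne' hexpid
    rw [key, Real.sqrt_mul (sq_nonneg _), Real.sqrt_sq (by positivity), ← hY]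
    have := aux_id3 Y (Real.exp (-x₀*τ)) (Real.exp (x₀*τ)) q hq0.ne' hexpid
    linarith only [this]

theorem stmt_2 (p q τ : ℝ) (hτ : 0 < τ) :
    (∀ z : ℂ, z + p + q * Complex.exp (-z * τ) = 0 → z.re < 0) ↔
      (-p < q ∧ q ≤ p) ∨
        (|p| < q ∧ 0 < τ ∧
          τ < 1 / Real.sqrt (q ^ 2 - p ^ 2) * Real.arccos (-(p / q))) := by
  constructor
  · intro hstab
    by_contra hcond
    push_neg at hcond
    obtain ⟨hA, hB⟩ := hcond
    rcases le_or_gt q (-p) with hqp | hqp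
    · obtain ⟨x, hx0, hroot⟩ := exists_real_root p q τ hτ (by linarith)
      have hz := hstab (Complex.mk x 0) ((root_iff p q τ x 0).2 ⟨by
          rw [zero_mul, Real.cos_zero, mul_one]; exact hroot, by
          rw [zero_mul, Real.sin_zero, mul_zero, sub_zero]⟩)
      have : x < 0 := hz
      linarith
    · have hpq : |p| < q := abs_lt.2 ⟨by linarith, hA hqp⟩
      have hq0 : 0 < q := lt_of_le_of_lt (abs_nonneg p) hpq
      have hp2 : p^2 < q^2 := by nlinarith [abs_lt.1 hpq, hq0]
      have hω0 : 0 < Real.sqrt (q^2 - p^2) := Real.sqrt_pos.2 (by linarith)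
      have hts' := hB hpq hτ
      have hts : Real.arccos (-(p/q)) ≤ τ * Real.sqrt (q^2 - p^2) := by
        rw [one_div] at hts'
        calc Real.arccos (-(p/q))
            = ((Real.sqrt (q^2-p^2))⁻¹ * Real.arccos (-(p/q))) * Real.sqrt (q^2-p^2) := by
              field_simp
          _ ≤ τ * Real.sqrt (q^2-p^2) := mul_le_mul_of_nonneg_right hts' hω0.le
      obtain ⟨x, Y, hx0, hE1, hE2⟩ := exists_root_late p q τ hτ hpq hts
      have hz := hstab (Complex.mk x Y) ((root_iff p q τ x Y).2 ⟨hE1, hE2⟩)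
      have : x < 0 := hz
      linarith
  · rintro hcond z hz
    by_contra hre
    push_neg at hre
    obtain ⟨E1, E2⟩ := (root_iff p q τ z.re z.im).1 (by rw [Complex.eta]; exact hz)
    have hEs : z.re + p + q * Real.exp (-z.re*τ) * Real.cos (|z.im| * τ) = 0 ∧
        |z.im| - q * Real.exp (-z.re*τ) * Real.sin (|z.im| * τ) = 0 := by
      rcases abs_cases z.im with ⟨h, _⟩ | ⟨h, _⟩
      · rw [h]; exact ⟨E1, E2⟩
      · rw [h]
        simp only [neg_mul, Real.cos_neg, Real.sin_neg] at E1 E2 ⊢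
        exact ⟨E1, by linarith [E2]⟩
    obtain ⟨E1', E2'⟩ := hEs
    rcases hcond with ⟨h1, h2⟩ | ⟨h1, h2, h3⟩
    · exact no_root_A p q τ z.re |z.im| hτ h1 h2 hre E1' E2'
    · exact no_root_B p q τ z.re |z.im| hτ h1 h3 hre (abs_nonneg _) E1' E2'
end

section
/- Suppose α ≠ 0, bc < 0, and α² ≥ a². If λ = iω with ω ∈ ℝ and τ ≥ 0 satisfy iω + α e^{-iωτ} + a + i d = 0 where d = √(-bc), then ω = -d - √(α² - a²) or ω = -d + √(α² - a²). -/
theorem stmt_3 (a α b c : ℝ) (hα : α ≠ 0) (hbc : b * c < 0) (hD : α ^ 2 ≥ a ^ 2)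
    (d : ℝ) (hd : d = Real.sqrt (-(b * c)))
    (ω τ : ℝ) (hτ : 0 ≤ τ)
    (heq : Complex.I * ω + α * Complex.exp (-(Complex.I * ω) * τ) + a + Complex.I * d = 0) :
    ω = -d - Real.sqrt (α ^ 2 - a ^ 2) ∨ ω = -d + Real.sqrt (α ^ 2 - a ^ 2) := by
  have hre := congrArg Complex.re heq
  have him := congrArg Complex.im heq
  simp [Complex.exp_re, Complex.exp_im, Complex.add_re, Complex.add_im,
    Complex.mul_re, Complex.mul_im] at hre him
  -- hre : α * cos (ω * τ) + a = 0 (roughly), him : ω - α * sin (ω * τ) + d = 0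
  have hc : α * Real.cos (ω * τ) + a = 0 := by linarith [hre]
  have hs : ω + d = α * Real.sin (ω * τ) := by linarith [him]
  have hsq : (ω + d) ^ 2 = α ^ 2 - a ^ 2 := by
    have hpy := Real.sin_sq_add_cos_sq (ω * τ)
    have ha : a = -(α * Real.cos (ω * τ)) := by linarith
    rw [hs, ha]; ring_nf; nlinarith [hpy]
  have hnn : (0:ℝ) ≤ α ^ 2 - a ^ 2 := by linarith
  have h2 : (ω + d) ^ 2 = (Real.sqrt (α ^ 2 - a ^ 2)) ^ 2 := by
    rw [Real.sq_sqrt hnn]; exact hsq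
  rcases sq_eq_sq_iff_eq_or_eq_neg.mp h2 with h | h
  · right; linarith
  · left; linarith
end

section
/- Suppose α ≠ 0, bc < 0, and α² < a². Then the equation λ + α e^{-λτ} + a + i√(-bc) = 0 has no purely imaginary root λ = iω with ω ∈ ℝ, for any τ ≥ 0. -/
theorem stmt_4 (a α b c : ℝ) (hα : α ≠ 0) (hbc : b * c < 0) (hD : α ^ 2 < a ^ 2)
    (d : ℝ) (hd : d = Real.sqrt (-(b * c))) :
    ∀ τ : ℝ, 0 ≤ τ → ∀ ω : ℝ,
      Complex.I * ω + α * Complex.exp (-(Complex.I * ω) * τ) + a + Complex.I * d ≠ 0 := by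
  intro τ hτ ω h
  have hre := congrArg Complex.re h
  simp [Complex.exp_re, Complex.add_re, Complex.mul_re, Complex.I_re, Complex.I_im,
    Complex.ofReal_re, Complex.ofReal_im] at hre
  have hcos : α * Real.cos (ω * τ) + a = 0 := by
    rw [show ω * τ = -(-(ω * τ)) by ring, Real.cos_neg] at *
    linarith [hre]
  have h1 : a ^ 2 ≤ α ^ 2 := by
    have ha : a = -(α * Real.cos (ω * τ)) := by linarith
    have hc2 : Real.cos (ω * τ) ^ 2 ≤ 1 := by
      nlinarith [Real.neg_one_le_cos (ω * τ), Real.cos_le_one (ω * τ)]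
    calc a ^ 2 = α ^ 2 * Real.cos (ω * τ) ^ 2 := by rw [ha]; ring
    _ ≤ α ^ 2 * 1 := by nlinarith [sq_nonneg α]
    _ = α ^ 2 := by ring
  linarith
end

section
/- Suppose α > 0, bc < 0, α² > a², and d = √(-bc). If ω₁ = -d - √(α² - a²) and τ = (1/ω₁)(-2nπ - arccos(-a/α)) for a nonnegative integer n, then λ = iω₁ satisfies λ + α e^{-λτ} + a + i d = 0. -/
theorem stmt_5 (a α b c : ℝ) (hα : 0 < α) (hbc : b * c < 0) (hD : α ^ 2 > a ^ 2)
    (d D E ω₁ : ℝ) (hd : d = Real.sqrt (-(b * c))) (hDdef : D = α ^ 2 - a ^ 2)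
    (hE : E = -(a / α)) (hω₁ : ω₁ = -d - Real.sqrt D)
    (n : ℕ) (τ : ℝ)
    (hτ : τ = (1 / ω₁) * (-(2 * n * Real.pi) - Real.arccos E)) :
    Complex.I * ω₁ + α * Complex.exp (-(Complex.I * ω₁) * τ) + a + Complex.I * d = 0 := by
  have hDpos : 0 < D := by rw [hDdef]; linarith
  have hsqrtD : 0 < Real.sqrt D := Real.sqrt_pos.mpr hDpos
  have hdpos : 0 < d := by
    rw [hd]; exact Real.sqrt_pos.mpr (by linarith)
  have hω₁neg : ω₁ < 0 := by rw [hω₁]; linarith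
  have hω₁ne : ω₁ ≠ 0 := ne_of_lt hω₁neg
  -- θ := ω₁ * τ
  have hθ : ω₁ * τ = -(Real.arccos E + n * (2 * Real.pi)) := by
    rw [hτ]; field_simp; ring
  have hcos : Real.cos (ω₁ * τ) = E := by
    rw [hθ, Real.cos_neg]
    rw [show (n : ℝ) * (2 * Real.pi) = (n : ℤ) * (2 * Real.pi) by push_cast; ring]
    rw [Real.cos_add_int_mul_two_pi]
    have ha : |a| < α := by nlinarith [sq_abs a, abs_nonneg a]
    have h1 : a / α ≤ 1 := (div_le_one hα).mpr (by linarith [le_abs_self a])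
    have h2 : -1 ≤ a / α := by
      rw [neg_le, ← neg_div]
      exact (div_le_one hα).mpr (by linarith [neg_abs_le a])
    apply Real.cos_arccos
    · rw [hE]; linarith
    · rw [hE]; linarith
  have hsin : Real.sin (ω₁ * τ) = -(Real.sqrt D / α) := by
    rw [hθ, Real.sin_neg]
    rw [show (n : ℝ) * (2 * Real.pi) = (n : ℤ) * (2 * Real.pi) by push_cast; ring]
    rw [Real.sin_add_int_mul_two_pi, Real.sin_arccos]
    congr 1
    rw [hE, hDdef]
    have h1 : 1 - (-(a / α)) ^ 2 = (α ^ 2 - a ^ 2) / α ^ 2 := by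
      field_simp
    rw [h1, Real.sqrt_div (by linarith : (0:ℝ) ≤ α ^ 2 - a ^ 2), Real.sqrt_sq hα.le]
  -- compute the exponential
  have hexp : Complex.exp (-(Complex.I * ω₁) * τ) = (E : ℂ) + (Real.sqrt D / α) * Complex.I := by
    have : -(Complex.I * (ω₁ : ℂ)) * (τ : ℂ) = ((-(ω₁ * τ) : ℝ) : ℂ) * Complex.I := by
      push_cast; ring
    rw [this, Complex.exp_mul_I]
    rw [← Complex.ofReal_cos, ← Complex.ofReal_sin, Real.cos_neg, Real.sin_neg, hcos, hsin]
    push_cast; ring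
  rw [hexp]
  have hαne : (α : ℂ) ≠ 0 := by exact_mod_cast hα.ne'
  have hαE : (α : ℂ) * E = -a := by
    rw [hE]; push_cast; field_simp
  have : (α : ℂ) * ((E : ℂ) + (Real.sqrt D / α) * Complex.I)
      = -a + (Real.sqrt D : ℂ) * Complex.I := by
    rw [mul_add, hαE]
    congr 1
    field_simp
  rw [this, hω₁]
  push_cast
  ring
end

section
/- Suppose α < 0, bc < 0, α² > a², and d = √(-bc). If ω₂ = -d + √(α² - a²), d ≠ √(α² - a²), and τ = (1/ω₂)(-2nπ - arccos(-a/α)) for a nonnegative integer n, then λ = iω₂ satisfies λ + α e^{-λτ} + a + i d = 0. -/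
theorem stmt_6 (a α b c : ℝ) (hα : α < 0) (hbc : b * c < 0) (hD : α ^ 2 > a ^ 2)
    (d D E ω₂ : ℝ) (hd : d = Real.sqrt (-(b * c))) (hDdef : D = α ^ 2 - a ^ 2)
    (hE : E = -(a / α)) (hω₂ : ω₂ = -d + Real.sqrt D) (hne : d ≠ Real.sqrt D)
    (n : ℕ) (τ : ℝ)
    (hτ : τ = (1 / ω₂) * (-(2 * n * Real.pi) - Real.arccos E)) :
    Complex.I * ω₂ + α * Complex.exp (-(Complex.I * ω₂) * τ) + a + Complex.I * d = 0 := by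
  have hα0 : α ≠ 0 := ne_of_lt hα
  have hω0 : ω₂ ≠ 0 := by
    rw [hω₂]
    intro h
    exact hne (by linarith)
  have hEα : E * α = -a := by rw [hE]; field_simp
  have ha2 : a ^ 2 = E ^ 2 * α ^ 2 := by
    have : a = -(E * α) := by linarith
    rw [this]; ring
  have hα2 : (0:ℝ) < α ^ 2 := by positivity
  have hE2 : E ^ 2 < 1 := by nlinarith
  have hEl : -1 ≤ E := by nlinarith
  have hEu : E ≤ 1 := by nlinarith
  have hDpos : 0 < D := by rw [hDdef]; linarith
  have hcos : Real.cos (Real.arccos E) = E := Real.cos_arccos hEl hEu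
  have hsqD : Real.sqrt (α ^ 2) = -α := by
    rw [Real.sqrt_sq_eq_abs, abs_of_neg hα]
  have hsin : Real.sin (Real.arccos E) = Real.sqrt D / (-α) := by
    rw [Real.sin_arccos, ← hsqD, ← Real.sqrt_div' _ (by positivity)]
    congr 1
    have : E ^ 2 = a ^ 2 / α ^ 2 := by
      rw [hE]; field_simp
    rw [this, hDdef]
    field_simp
  have hωτ : ω₂ * τ = -(2 * n * Real.pi) - Real.arccos E := by
    rw [hτ]; field_simp
  have hexp : Complex.exp (-(Complex.I * ω₂) * τ) =
      Complex.exp ((Real.arccos E : ℂ) * Complex.I) := by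
    have : -(Complex.I * (ω₂ : ℂ)) * (τ : ℂ) =
        (Real.arccos E : ℂ) * Complex.I + (n : ℤ) * (2 * Real.pi * Complex.I) := by
      have h : ((ω₂ * τ : ℝ) : ℂ) = ((-(2 * n * Real.pi) - Real.arccos E : ℝ) : ℂ) := by
        exact congrArg Complex.ofReal hωτ
      push_cast at h ⊢
      linear_combination (-Complex.I) * h
    rw [this, Complex.exp_add, Complex.exp_int_mul_two_pi_mul_I, mul_one]
  rw [hexp, Complex.exp_mul_I, ← Complex.ofReal_cos, ← Complex.ofReal_sin, hcos, hsin]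
  have hω : (ω₂ : ℂ) = -(d : ℂ) + (Real.sqrt D : ℂ) := by
    have := congrArg Complex.ofReal hω₂; push_cast at this; exact this
  have hEαc : (E : ℂ) * (α : ℂ) = -(a : ℂ) := by
    have := congrArg Complex.ofReal hEα; push_cast at this; exact this
  have hαc : (α : ℂ) ≠ 0 := by exact_mod_cast hα0
  have key : ((Real.sqrt D / -α : ℝ) : ℂ) * (α : ℂ) = -((Real.sqrt D : ℝ) : ℂ) := by
    push_cast; rw [div_neg, neg_mul, div_mul_cancel₀ _ hαc]
  rw [hω]
  linear_combination Complex.I * key + hEαc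
end

section
/- Suppose λ = λ(τ) is a differentiable branch of roots of λ + α e^{-λτ} + a + i d = 0 near a point where λ(τ) = iω is purely imaginary, ω ∈ ℝ, and (1 + aτ)² + τ²(ω + d)² ≠ 0. Then Re(dλ/dτ) at λ = iω equals ω(ω + d) / ((1 + aτ)² + τ²(ω + d)²). -/
theorem stmt_8 (a α d τ ω : ℝ) (hτ : 0 ≤ τ)
    (lam : ℝ → ℂ) (lam' : ℂ)
    (hderiv : HasDerivAt lam lam' τ)
    (hroot : ∀ᶠ s in nhds τ,
      lam s + α * Complex.exp (-lam s * s) + a + Complex.I * d = 0)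
    (hval : lam τ = Complex.I * ω)
    (hden : (1 + a * τ) ^ 2 + τ ^ 2 * (ω + d) ^ 2 ≠ 0) :
    lam'.re = ω * (ω + d) / ((1 + a * τ) ^ 2 + τ ^ 2 * (ω + d) ^ 2) := by
  have hcoe : HasDerivAt (fun s : ℝ => (s : ℂ)) 1 τ := (hasDerivAt_id τ).ofReal_comp
  have h1 : HasDerivAt (fun s : ℝ => -lam s * s) (-lam' * τ + -lam τ * 1) τ :=
    hderiv.neg.mul hcoe
  have h2 : HasDerivAt (fun s : ℝ => (α : ℂ) * Complex.exp (-lam s * s))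
      ((α : ℂ) * (Complex.exp (-lam τ * τ) * (-lam' * τ + -lam τ * 1))) τ :=
    h1.cexp.const_mul _
  have hg : HasDerivAt
      (fun s : ℝ => lam s + α * Complex.exp (-lam s * s) + a + Complex.I * d)
      (lam' + α * (Complex.exp (-lam τ * τ) * (-lam' * τ + -lam τ * 1))) τ :=
    ((hderiv.add h2).add_const _).add_const _
  have hzero : HasDerivAt (fun _ : ℝ => (0 : ℂ))
      (lam' + α * (Complex.exp (-lam τ * τ) * (-lam' * τ + -lam τ * 1))) τ :=
    hg.congr_of_eventuallyEq (hroot.mono fun s hs => hs.symm)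
  have hD : lam' + α * (Complex.exp (-lam τ * τ) * (-lam' * τ + -lam τ * 1)) = 0 :=
    (hzero.unique (hasDerivAt_const τ 0)).trans rfl
  have hE : (α : ℂ) * Complex.exp (-lam τ * τ) = -(lam τ + a + Complex.I * d) := by
    have h := hroot.self_of_nhds
    linear_combination h
  set c : ℂ := Complex.I * ω + a + Complex.I * d with hc
  have hw : (1 : ℂ) + τ * c ≠ 0 := by
    intro h
    apply hden
    have hre := congrArg Complex.re h
    have him := congrArg Complex.im h
    simp only [hc, Complex.add_re, Complex.add_im, Complex.mul_re, Complex.mul_im,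
      Complex.ofReal_re, Complex.ofReal_im, Complex.I_re, Complex.I_im,
      Complex.one_re, Complex.one_im, Complex.zero_re, Complex.zero_im] at hre him
    linear_combination (1 + a * τ) * hre + τ * (ω + d) * him
  have hkey : lam' * (1 + τ * c) = -c * (Complex.I * ω) := by
    rw [hval] at hD hE
    linear_combination hD - (-lam' * τ + -(Complex.I * ω) * 1) * hE
  have hlam : lam' = -c * (Complex.I * ω) / (1 + τ * c) := by
    field_simp at hkey ⊢
    linear_combination hkey
  rw [hlam, Complex.div_re]
  have hns : Complex.normSq (1 + τ * c) = (1 + a * τ) ^ 2 + τ ^ 2 * (ω + d) ^ 2 := by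
    simp [hc, Complex.normSq_apply, Complex.add_re, Complex.add_im, Complex.mul_re,
      Complex.mul_im]
    ring
  rw [hns]
  have h1 : (-c * (Complex.I * ω)).re = ω * (ω + d) := by
    simp [hc, Complex.mul_re, Complex.mul_im]
    ring
  have h2 : (-c * (Complex.I * ω)).im = -(a * ω) := by
    simp [hc, Complex.mul_re, Complex.mul_im]
  have h3 : ((1 : ℂ) + τ * c).re = 1 + a * τ := by
    simp [hc, Complex.mul_re]
    ring
  have h4 : ((1 : ℂ) + τ * c).im = τ * (ω + d) := by
    simp [hc, Complex.mul_im]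
  rw [h1, h2, h3, h4]
  field_simp
  ring
end

section
/- Let 0 < √D < d, E ∈ (-1,1), and k = ⌊d·arccos(E)/(2√D π)⌋. With r_{1,n}, r_{2,n} as in the case α > 0 (r_{1,n} = (-2nπ - arccos E)/ω₁, r_{2,n} = (-2(n+1)π + arccos E)/ω₂, ω₁ = -d-√D, ω₂ = -d+√D), one has r_{1,n} - r_{2,n-1} > 0 for 1 ≤ n ≤ k and r_{1,n} - r_{2,n-1} < 0 for n ≥ k+1, provided d·arccos(E)/(2√D π) is not an integer. -/
theorem stmt_14 (D d E : ℝ) (hD : 0 < Real.sqrt D) (hdD : Real.sqrt D < d)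
    (hE : E ∈ Set.Ioo (-1 : ℝ) 1)
    (hnotint : ¬ ∃ m : ℤ, d * Real.arccos E / (2 * Real.sqrt D * Real.pi) = m)
    (k : ℤ) (hk : k = ⌊d * Real.arccos E / (2 * Real.sqrt D * Real.pi)⌋)
    (ω₁ ω₂ : ℝ) (hω₁ : ω₁ = -d - Real.sqrt D) (hω₂ : ω₂ = -d + Real.sqrt D)
    (r₁ r₂ : ℕ → ℝ)
    (hr₁ : ∀ n : ℕ, r₁ n = (-(2 * n * Real.pi) - Real.arccos E) / ω₁)
    (hr₂ : ∀ n : ℕ, r₂ n = (-(2 * (n + 1) * Real.pi) + Real.arccos E) / ω₂) :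
    (∀ n : ℕ, 1 ≤ n → (n : ℤ) ≤ k → r₁ n - r₂ (n - 1) > 0) ∧
      (∀ n : ℕ, k + 1 ≤ (n : ℤ) → r₁ n - r₂ (n - 1) < 0) := by
  obtain ⟨hE1, hE2⟩ := hE
  set s := Real.sqrt D with hs
  set a := Real.arccos E with ha
  have ha0 : 0 < a := Real.arccos_pos.mpr hE2
  have hπ : 0 < Real.pi := Real.pi_pos
  have hds : 0 < d - s := by linarith
  have hds' : 0 < d + s := by linarith
  set x := d * a / (2 * s * Real.pi) with hx
  have hd0 : 0 < d := lt_trans hD hdD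
  have hx0 : 0 < x :=
    div_pos (mul_pos hd0 ha0) (by positivity)
  have hkle : (k : ℝ) ≤ x := hk ▸ Int.floor_le x
  have hkne : (k : ℝ) ≠ x := fun h => hnotint ⟨k, h.symm⟩
  have hklt : (k : ℝ) < x := lt_of_le_of_ne hkle hkne
  have hxlt : x < k + 1 := hk ▸ Int.lt_floor_add_one x
  have hk0 : 0 ≤ k := by
    rw [hk]; exact Int.floor_nonneg.mpr hx0.le
  have key : ∀ n : ℕ, 1 ≤ n →
      r₁ n - r₂ (n - 1) = 4 * Real.pi * s * (x - n) / ((d + s) * (d - s)) := by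
    intro n hn
    have hc : ((n - 1 : ℕ) : ℝ) = (n : ℝ) - 1 := by
      push_cast [Nat.cast_sub hn]; ring
    have h1 : (-d - s) ≠ 0 := by nlinarith
    have h2 : (-d + s) ≠ 0 := by nlinarith
    rw [hr₁, hr₂, hc, hω₁, hω₂, hx]
    have hsne : s ≠ 0 := ne_of_gt hD
    have hπne : Real.pi ≠ 0 := ne_of_gt hπ
    field_simp
    ring
  constructor
  · intro n hn hnk
    rw [key n hn]
    have hnx : (n : ℝ) < x := by
      have : (n : ℝ) ≤ (k : ℝ) := by exact_mod_cast hnk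
      linarith
    exact div_pos (mul_pos (mul_pos (mul_pos four_pos hπ) hD) (by linarith))
      (mul_pos hds' hds)
  · intro n hn
    have hn1 : 1 ≤ n := by
      have : (1 : ℤ) ≤ (n : ℤ) := le_trans (by linarith) hn
      exact_mod_cast this
    rw [key n hn1]
    have hnx : x < (n : ℝ) := by
      have : (k : ℝ) + 1 ≤ (n : ℝ) := by exact_mod_cast hn
      linarith
    exact div_neg_of_neg_of_pos
      (mul_neg_of_pos_of_neg (mul_pos (mul_pos four_pos hπ) hD) (by linarith))
      (mul_pos hds' hds)
end

section
/- Let 0 < √D < d, E ∈ (-1,1), and suppose k = ⌊d·arccos(E)/(2√Dπ)⌋ ≥ 1 with d·arccos(E)/(2√Dπ) ∉ ℤ. Then the interleaving 0 < r_{1,0} < r_{2,0} < r_{1,1} < ⋯ < r_{2,k-1} < r_{1,k} < r_{1,k+1} holds, where r_{1,n} = (-2nπ - arccos E)/(-d - √D) and r_{2,n} = (-2(n+1)π + arccos E)/(-d + √D). -/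
theorem stmt_15 (D d E : ℝ) (hD : 0 < Real.sqrt D) (hdD : Real.sqrt D < d)
    (hE : E ∈ Set.Ioo (-1 : ℝ) 1)
    (hnotint : ¬ ∃ m : ℤ, d * Real.arccos E / (2 * Real.sqrt D * Real.pi) = m)
    (k : ℕ) (hk : (k : ℤ) = ⌊d * Real.arccos E / (2 * Real.sqrt D * Real.pi)⌋)
    (hk1 : 1 ≤ k)
    (r₁ r₂ : ℕ → ℝ)
    (hr₁ : ∀ n : ℕ, r₁ n = (-(2 * n * Real.pi) - Real.arccos E) / (-d - Real.sqrt D))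
    (hr₂ : ∀ n : ℕ, r₂ n = (-(2 * (n + 1) * Real.pi) + Real.arccos E) / (-d + Real.sqrt D)) :
    0 < r₁ 0 ∧
      (∀ n : ℕ, n ≤ k - 1 → r₁ n < r₂ n) ∧
      (∀ n : ℕ, n + 1 ≤ k → r₂ n < r₁ (n + 1)) ∧
      r₁ k < r₁ (k + 1) := by
  obtain ⟨hE1, hE2⟩ := hE
  set s := Real.sqrt D with hsdef
  set θ := Real.arccos E with hθdef
  have hs0 : 0 < s := hD
  have hd0 : 0 < d := lt_trans hs0 hdD
  have hπ := Real.pi_pos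
  have hθ0 : 0 < θ := Real.arccos_pos.2 hE2
  have hθπ : θ < Real.pi := lt_of_le_of_ne (Real.arccos_le_pi E)
    (fun h => absurd (Real.arccos_eq_pi.1 h) (by linarith))
  have hdps : 0 < d + s := by linarith
  have hdms : 0 < d - s := by linarith
  have hR1 : ∀ n : ℕ, r₁ n = (2 * n * Real.pi + θ) / (d + s) := by
    intro n
    rw [hr₁ n, show -(2 * (n : ℝ) * Real.pi) - θ = -(2 * n * Real.pi + θ) by ring,
        show -d - s = -(d + s) by ring, neg_div_neg_eq]
  have hR2 : ∀ n : ℕ, r₂ n = (2 * ((n : ℝ) + 1) * Real.pi - θ) / (d - s) := by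
    intro n
    rw [hr₂ n, show -(2 * ((n : ℝ) + 1) * Real.pi) + θ = -(2 * ((n : ℝ) + 1) * Real.pi - θ) by ring,
        show -d + s = -(d - s) by ring, neg_div_neg_eq]
  have h2sπ : 0 < 2 * s * Real.pi := by positivity
  have hkx : (k : ℝ) < d * θ / (2 * s * Real.pi) := by
    have h1 : ((k : ℤ) : ℝ) ≤ d * θ / (2 * s * Real.pi) := hk ▸ Int.floor_le _
    rcases lt_or_eq_of_le h1 with h | h
    · exact_mod_cast h
    · exact absurd ⟨(k : ℤ), h.symm⟩ hnotint
  have hkd : (k : ℝ) * (2 * s * Real.pi) < d * θ := (lt_div_iff₀ h2sπ).1 hkx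
  refine ⟨?_, ?_, ?_, ?_⟩
  · rw [hR1 0]
    apply div_pos _ hdps
    push_cast
    linarith
  · intro n _
    rw [hR1 n, hR2 n, div_lt_div_iff₀ hdps hdms]
    have hn : (0 : ℝ) ≤ n := Nat.cast_nonneg n
    nlinarith [mul_pos hπ hs0, mul_nonneg hn (mul_pos hπ hs0).le,
      mul_lt_mul_of_pos_right hθπ hd0]
  · intro n hn
    rw [hR2 n, hR1 (n + 1), div_lt_div_iff₀ hdms hdps]
    have hn' : ((n : ℝ) + 1) ≤ k := by exact_mod_cast hn
    push_cast
    nlinarith [h2sπ]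
  · rw [hR1 k, hR1 (k + 1), div_lt_div_iff₀ hdps hdps]
    push_cast
    nlinarith [mul_pos hπ hdps]
end
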